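/- Let R be an integral domain in which 2 is invertible, and let θ₁, θ₂ ∈ R[[X,Y]] be composable power series such that the split 2-valued series F_t(X,Y) = (1 + θ₁(X,Y)t)(1 + θ₂(X,Y)t) ∈ R[[X,Y]][t] satisfies: (neutral element) F_t(X,0) = (1+Xt)², i.e. θ₁(X,0) + θ₂(X,0) = 2X and θ₁(X,0)·θ₂(X,0) = X²; (symmetry) F_t(X,Y) = F_t(Y,X), i.e. θ₁+θ₂ and θ₁·θ₂ are symmetric in X,Y; and (associativity, in split form) the identity ∏_{i,j ∈ {1,2}} (1 + θᵢ(θⱼ(X,Y), Z)t) = ∏_{i,j ∈ {1,2}} (1 + θᵢ(X, θⱼ(Y,Z))t) holds in R[[X,Y,Z]][t]. Then θ₁ = θ₂, and θ₁ is a commutative formal group law over R. -/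

import Mathlib

noncomputable section

/-- The weight (total degree) of a multi-exponent. -/
def wt {τ : Type*} (d : τ →₀ ℕ) : ℕ := d.sum fun _ e => e

/-- Substitution of a family of multivariate power series (each having zero constant
coefficient) into a multivariate power series in finitely many variables.  The coefficient
of the result in multidegree `d` is computed from a sufficiently large truncation of `f`;
this agrees with the usual substitution whenever every `a i` has zero constant coefficient. -/
def msubst {R : Type*} [CommRing R] {k : ℕ} {τ : Type*}
    (a : Fin k → MvPowerSeries τ R) (f : MvPowerSeries (Fin k) R) : MvPowerSeries τ R :=
  fun d => MvPowerSeries.coeff d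
    (MvPolynomial.eval₂ (MvPowerSeries.C (σ := τ) (R := R)) a
      (MvPowerSeries.trunc R (Finsupp.equivFunOnFinite.symm fun _ => wt d + 1) f))

/-- Substitution of a multivariate power series with zero constant coefficient into a
one-variable power series. -/
def psubst {R : Type*} [CommRing R] {τ : Type*}
    (a : MvPowerSeries τ R) (f : PowerSeries R) : MvPowerSeries τ R :=
  fun d => MvPowerSeries.coeff d
    (Polynomial.eval₂ (MvPowerSeries.C (σ := τ) (R := R)) a (PowerSeries.trunc (wt d + 1) f))

/-- A (one-dimensional, commutative) formal group law over `R`: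
`F(X,0) = X`, `F(0,Y) = Y`, `F(X,Y) = F(Y,X)` and `F(F(X,Y),Z) = F(X,F(Y,Z))`. -/
structure IsFGL {R : Type*} [CommRing R] (F : MvPowerSeries (Fin 2) R) : Prop where
  zero_right : msubst ![MvPowerSeries.X 0, 0] F = (MvPowerSeries.X 0 : MvPowerSeries (Fin 2) R)
  zero_left : msubst ![0, MvPowerSeries.X 1] F = (MvPowerSeries.X 1 : MvPowerSeries (Fin 2) R)
  comm : msubst ![MvPowerSeries.X 1, MvPowerSeries.X 0] F = F
  assoc : msubst ![msubst ![(MvPowerSeries.X 0 : MvPowerSeries (Fin 3) R), MvPowerSeries.X 1] F,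
        MvPowerSeries.X 2] F
      = msubst ![(MvPowerSeries.X 0 : MvPowerSeries (Fin 3) R),
        msubst ![MvPowerSeries.X 1, MvPowerSeries.X 2] F] F

/-- `ι` is the formal inverse of the formal group law `F`: it is composable and
`F(X, ι(X)) = 0` in `R[[X]]`. -/
def IsFormalInverse {R : Type*} [CommRing R] (F : MvPowerSeries (Fin 2) R)
    (ι : PowerSeries R) : Prop :=
  PowerSeries.constantCoeff (R := R) ι = 0 ∧
    msubst ![(PowerSeries.X : PowerSeries R), ι] F = 0

end

noncomputable section

namespace Stmt16

open MvPowerSeries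

variable {R : Type*} [CommRing R] {τ : Type*} {k : ℕ}

lemma wt_add (u v : τ →₀ ℕ) : wt (u + v) = wt u + wt v := by
  classical
  exact Finsupp.sum_add_index' (fun _ => rfl) (fun _ _ _ => rfl)

lemma wt_zero : wt (0 : τ →₀ ℕ) = 0 := by simp [wt]

lemma wt_eq_zero_iff {d : τ →₀ ℕ} : wt d = 0 ↔ d = 0 := by
  classical
  constructor
  · intro h
    ext x
    by_contra hx
    have hmem : x ∈ d.support := Finsupp.mem_support_iff.2 (by simpa using hx)
    have := Finset.sum_eq_zero_iff.1 h x hmem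
    exact hx (by simpa using this)
  · rintro rfl; simp [wt]

lemma le_wt (d : τ →₀ ℕ) (i : τ) : d i ≤ wt d := by
  classical
  by_cases h : d i = 0
  · simp [h]
  · exact Finset.single_le_sum (f := fun x => d x) (fun _ _ => Nat.zero_le _)
      (Finsupp.mem_support_iff.2 h)

lemma bnd_apply {W : ℕ} (i : Fin k) :
    (Finsupp.equivFunOnFinite.symm fun _ : Fin k => W + 1) i = W + 1 := by
  simp

lemma coeff_msubst_def (a : Fin k → MvPowerSeries τ R) (f : MvPowerSeries (Fin k) R)
    (d : τ →₀ ℕ) :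
    MvPowerSeries.coeff d (msubst a f)
      = MvPowerSeries.coeff d (MvPolynomial.eval₂ (MvPowerSeries.C (σ := τ) (R := R)) a
        (MvPowerSeries.trunc R (Finsupp.equivFunOnFinite.symm fun _ => wt d + 1) f)) := by
  rw [MvPowerSeries.coeff_apply]
  rfl

/-- all coefficients of weight < n vanish -/
def LowZero (n : ℕ) (φ : MvPowerSeries τ R) : Prop :=
  ∀ d : τ →₀ ℕ, wt d < n → MvPowerSeries.coeff d φ = 0

lemma lowZero_of_constantCoeff {φ : MvPowerSeries τ R}
    (h : constantCoeff (σ := τ) (R := R) φ = 0) : LowZero 1 φ := by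
  intro d hd
  have : d = 0 := wt_eq_zero_iff.1 (Nat.lt_one_iff.1 hd)
  subst this
  simpa [MvPowerSeries.coeff_zero_eq_constantCoeff] using h

lemma LowZero.mul {m n : ℕ} {φ ψ : MvPowerSeries τ R}
    (hφ : LowZero m φ) (hψ : LowZero n ψ) : LowZero (m + n) (φ * ψ) := by
  classical
  intro d hd
  rw [MvPowerSeries.coeff_mul]
  apply Finset.sum_eq_zero
  rintro ⟨u, v⟩ huv
  have huv' : u + v = d := Finset.HasAntidiagonal.mem_antidiagonal.1 huv
  have hwt : wt u + wt v < m + n := by rw [← wt_add, huv']; exact hd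
  rcases lt_or_ge (wt u) m with h | h
  · rw [hφ u h, zero_mul]
  · have : wt v < n := by omega
    rw [hψ v this, mul_zero]

lemma LowZero.pow {m : ℕ} {φ : MvPowerSeries τ R} (hφ : LowZero m φ) :
    ∀ e : ℕ, LowZero (m * e) (φ ^ e)
  | 0 => by intro d hd; simp at hd
  | e + 1 => by
    rw [pow_succ, Nat.mul_succ]
    exact (LowZero.pow hφ e).mul hφ

lemma lowZero_prod {ι : Type*} (s : Finset ι) (g : ι → MvPowerSeries τ R) (n : ι → ℕ)
    (h : ∀ i ∈ s, LowZero (n i) (g i)) :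
    LowZero (∑ i ∈ s, n i) (∏ i ∈ s, g i) := by
  classical
  revert h
  induction s using Finset.cons_induction with
  | empty =>
    intro _ d hd
    rw [Finset.sum_empty] at hd
    exact absurd hd (Nat.not_lt_zero _)
  | cons x s' hx ih =>
    intro h
    rw [Finset.sum_cons, Finset.prod_cons]
    exact (h x (Finset.mem_cons_self _ _)).mul
      (ih fun i hi => h i (Finset.mem_cons_of_mem hi))

lemma wt_eq_sum [Fintype τ] (d : τ →₀ ℕ) : wt d = ∑ i, d i :=
  Finsupp.sum_fintype _ _ (fun _ => rfl)

lemma coeff_eval₂_eq_zero (a : Fin k → MvPowerSeries τ R)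
    (ha : ∀ i, constantCoeff (σ := τ) (R := R) (a i) = 0) (q : MvPolynomial (Fin k) R) (d : τ →₀ ℕ)
    (hq : ∀ e ∈ q.support, wt d < wt e) :
    MvPowerSeries.coeff d (MvPolynomial.eval₂ (MvPowerSeries.C (σ := τ) (R := R)) a q) = 0 := by
  classical
  rw [MvPolynomial.eval₂_eq', map_sum]
  apply Finset.sum_eq_zero
  intro e he
  rw [MvPowerSeries.coeff_C_mul]
  have : LowZero (∑ i, e i) (∏ i, a i ^ e i) := by
    have := lowZero_prod Finset.univ (fun i => a i ^ e i) (fun i => 1 * e i)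
      (fun i _ => (lowZero_of_constantCoeff (ha i)).pow (e i))
    simpa using this
  rw [this d (by rw [← wt_eq_sum]; exact hq e he), mul_zero]

lemma lt_bnd {W : ℕ} (hk : k ≠ 0) {e : Fin k →₀ ℕ} (hcon : wt e ≤ W) :
    e < Finsupp.equivFunOnFinite.symm fun _ : Fin k => W + 1 := by
  rw [lt_iff_le_and_ne]
  constructor
  · rw [Finsupp.le_iff]
    intro i _
    rw [bnd_apply]
    have := le_wt e i
    omega
  · intro heq
    obtain ⟨i⟩ := Fin.pos_iff_nonempty.1 (Nat.pos_of_ne_zero hk)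
    have h1 : e i = W + 1 := by rw [heq, bnd_apply]
    have := le_wt e i
    omega

/-- Master lemma -/
lemma coeff_msubst (hk : k ≠ 0) (a : Fin k → MvPowerSeries τ R)
    (ha : ∀ i, constantCoeff (σ := τ) (R := R) (a i) = 0)
    (f : MvPowerSeries (Fin k) R) (d : τ →₀ ℕ) (p : MvPolynomial (Fin k) R)
    (hp : ∀ e : Fin k →₀ ℕ, wt e ≤ wt d → p.coeff e = MvPowerSeries.coeff e f) :
    MvPowerSeries.coeff d (msubst a f)
      = MvPowerSeries.coeff d (MvPolynomial.eval₂ (MvPowerSeries.C (σ := τ) (R := R)) a p) := by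
  classical
  rw [coeff_msubst_def]
  set n : (Fin k) →₀ ℕ := Finsupp.equivFunOnFinite.symm fun _ => wt d + 1 with hn
  set q : MvPolynomial (Fin k) R := MvPowerSeries.trunc R n f - p with hq
  have hsupp : ∀ e ∈ q.support, wt d < wt e := by
    intro e he
    by_contra hcon
    push_neg at hcon
    have helt : e < n := lt_bnd hk hcon
    have : q.coeff e = 0 := by
      rw [hq, MvPolynomial.coeff_sub, MvPowerSeries.coeff_trunc, if_pos helt, hp e hcon,
        sub_self]
    exact (MvPolynomial.mem_support_iff.1 he) this
  have h0 := coeff_eval₂_eq_zero a ha q d hsupp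
  rw [hq, MvPolynomial.eval₂_sub, map_sub, sub_eq_zero] at h0
  exact h0

lemma coeff_trunc_matches (hk : k ≠ 0) (f : MvPowerSeries (Fin k) R) (W : ℕ)
    (e : Fin k →₀ ℕ) (he : wt e ≤ W) :
    (MvPowerSeries.trunc R (Finsupp.equivFunOnFinite.symm fun _ => W + 1) f).coeff e
      = MvPowerSeries.coeff e f := by
  classical
  rw [MvPowerSeries.coeff_trunc]
  exact if_pos (lt_bnd hk he)

lemma msubst_add (a : Fin k → MvPowerSeries τ R) (f g : MvPowerSeries (Fin k) R) :
    msubst a (f + g) = msubst a f + msubst a g := by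
  ext d
  rw [map_add, coeff_msubst_def, coeff_msubst_def, coeff_msubst_def,
    map_add (MvPowerSeries.trunc R _) f g, MvPolynomial.eval₂_add, map_add]

lemma msubst_zero (a : Fin k → MvPowerSeries τ R) : msubst a 0 = 0 := by
  ext d
  rw [coeff_msubst_def, map_zero (MvPowerSeries.trunc R _), MvPolynomial.eval₂_zero]

lemma msubst_neg (a : Fin k → MvPowerSeries τ R) (f : MvPowerSeries (Fin k) R) :
    msubst a (-f) = - msubst a f := by
  have := msubst_add a f (-f)
  rw [add_neg_cancel, msubst_zero] at this
  exact eq_neg_of_add_eq_zero_right this.symm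

lemma msubst_sub (a : Fin k → MvPowerSeries τ R) (f g : MvPowerSeries (Fin k) R) :
    msubst a (f - g) = msubst a f - msubst a g := by
  rw [sub_eq_add_neg, msubst_add, msubst_neg, sub_eq_add_neg]

variable (hk : k ≠ 0) (a : Fin k → MvPowerSeries τ R)
  (ha : ∀ i, MvPowerSeries.constantCoeff (σ := τ) (R := R) (a i) = 0)

include hk ha in
lemma msubst_mul (f g : MvPowerSeries (Fin k) R) :
    msubst a (f * g) = msubst a f * msubst a g := by
  classical
  ext d
  set P := MvPowerSeries.trunc R (Finsupp.equivFunOnFinite.symm fun _ => wt d + 1) f with hP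
  set Q := MvPowerSeries.trunc R (Finsupp.equivFunOnFinite.symm fun _ => wt d + 1) g with hQ
  have hPm : ∀ e : Fin k →₀ ℕ, wt e ≤ wt d → P.coeff e = MvPowerSeries.coeff e f :=
    fun e he => coeff_trunc_matches hk f (wt d) e he
  have hQm : ∀ e : Fin k →₀ ℕ, wt e ≤ wt d → Q.coeff e = MvPowerSeries.coeff e g :=
    fun e he => coeff_trunc_matches hk g (wt d) e he
  have h1 : MvPowerSeries.coeff d (msubst a (f * g))
      = MvPowerSeries.coeff d (MvPolynomial.eval₂ (MvPowerSeries.C (σ := τ) (R := R)) a (P * Q)) := by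
    apply coeff_msubst hk a ha
    intro e he
    rw [MvPolynomial.coeff_mul, MvPowerSeries.coeff_mul]
    apply Finset.sum_congr rfl
    rintro ⟨u, v⟩ huv
    dsimp only
    have huv' : u + v = e := Finset.HasAntidiagonal.mem_antidiagonal.1 huv
    have hu : wt u ≤ wt d := by
      have := wt_add u v; rw [huv'] at this; omega
    have hv : wt v ≤ wt d := by
      have := wt_add u v; rw [huv'] at this; omega
    rw [hPm u hu, hQm v hv]
  have h2 : MvPowerSeries.coeff d (msubst a f * msubst a g)
      = MvPowerSeries.coeff d
        (MvPolynomial.eval₂ (MvPowerSeries.C (σ := τ) (R := R)) a P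
          * MvPolynomial.eval₂ (MvPowerSeries.C (σ := τ) (R := R)) a Q) := by
    rw [MvPowerSeries.coeff_mul, MvPowerSeries.coeff_mul]
    apply Finset.sum_congr rfl
    rintro ⟨u, v⟩ huv
    dsimp only
    have huv' : u + v = d := Finset.HasAntidiagonal.mem_antidiagonal.1 huv
    have hu : wt u ≤ wt d := by
      have := wt_add u v; rw [huv'] at this; omega
    have hv : wt v ≤ wt d := by
      have := wt_add u v; rw [huv'] at this; omega
    rw [coeff_msubst hk a ha f u P (fun e he => hPm e (le_trans he hu)),
      coeff_msubst hk a ha g v Q (fun e he => hQm e (le_trans he hv))]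
  rw [h1, h2, MvPolynomial.eval₂_mul]

include hk ha in
lemma msubst_C (r : R) : msubst a (MvPowerSeries.C (σ := (Fin k)) (R := R) r) = MvPowerSeries.C (σ := τ) (R := R) r := by
  classical
  ext d
  rw [coeff_msubst hk a ha _ d (MvPolynomial.C r) ?hmatch, MvPolynomial.eval₂_C]
  case hmatch =>
    intro e _
    rw [MvPolynomial.coeff_C, MvPowerSeries.coeff_C]
    by_cases h : e = 0 <;> simp [h, eq_comm]

include hk ha in
lemma msubst_one : msubst a 1 = 1 := by
  have := msubst_C hk a ha 1
  simpa using this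

include hk ha in
lemma msubst_X (i : Fin k) : msubst a (MvPowerSeries.X i) = a i := by
  classical
  ext d
  rw [coeff_msubst hk a ha _ d (MvPolynomial.X i) ?hmatch, MvPolynomial.eval₂_X]
  case hmatch =>
    intro e _
    rw [MvPolynomial.coeff_X', MvPowerSeries.coeff_X]
    by_cases h : e = Finsupp.single i 1 <;> simp [h, eq_comm]

include hk ha in
lemma constantCoeff_msubst (f : MvPowerSeries (Fin k) R) :
    MvPowerSeries.constantCoeff (σ := τ) (R := R) (msubst a f)
      = MvPowerSeries.constantCoeff (σ := (Fin k)) (R := R) f := by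
  classical
  have h := coeff_msubst hk a ha f 0 (MvPolynomial.C (MvPowerSeries.constantCoeff (σ := (Fin k)) (R := R) f))
    ?hmatch
  case hmatch =>
    intro e he
    have h0 : wt (0 : τ →₀ ℕ) = 0 := wt_zero
    have he0 : e = 0 := wt_eq_zero_iff.1 (by omega)
    subst he0
    rw [MvPolynomial.coeff_C, if_pos rfl, MvPowerSeries.coeff_zero_eq_constantCoeff_apply]
  rw [MvPolynomial.eval₂_C] at h
  rw [← MvPowerSeries.coeff_zero_eq_constantCoeff_apply, h,
    MvPowerSeries.coeff_zero_eq_constantCoeff_apply, MvPowerSeries.constantCoeff_C]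

lemma msubst_id (hk : k ≠ 0) (f : MvPowerSeries (Fin k) R) :
    msubst (fun i => (MvPowerSeries.X i : MvPowerSeries (Fin k) R)) f = f := by
  classical
  ext d
  have hX : ∀ i, MvPowerSeries.constantCoeff (σ := (Fin k)) (R := R) (MvPowerSeries.X i) = 0 :=
    fun i => MvPowerSeries.constantCoeff_X i
  set p := MvPowerSeries.trunc R (Finsupp.equivFunOnFinite.symm fun _ => wt d + 1) f with hp
  rw [coeff_msubst hk _ hX f d p (fun e he => coeff_trunc_matches hk f (wt d) e he)]
  have hcoe : MvPolynomial.eval₂ (MvPowerSeries.C (σ := (Fin k)) (R := R))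
      (fun i => (MvPowerSeries.X i : MvPowerSeries (Fin k) R)) p = ↑p := by
    induction p using MvPolynomial.induction_on with
    | C r => rw [MvPolynomial.eval₂_C, MvPolynomial.coe_C]
    | add p q hp hq => rw [MvPolynomial.eval₂_add, MvPolynomial.coe_add, hp, hq]
    | mul_X p i hp => rw [MvPolynomial.eval₂_mul, MvPolynomial.eval₂_X, MvPolynomial.coe_mul,
        MvPolynomial.coe_X, hp]
  rw [hcoe, MvPolynomial.coeff_coe]
  exact coeff_trunc_matches hk f (wt d) d le_rfl

variable {m : ℕ}

lemma msubst_comp (hk : k ≠ 0) (hm : m ≠ 0)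
    (b : Fin k → MvPowerSeries (Fin m) R) (c : Fin m → MvPowerSeries τ R)
    (hb : ∀ i, MvPowerSeries.constantCoeff (σ := (Fin m)) (R := R) (b i) = 0)
    (hc : ∀ j, MvPowerSeries.constantCoeff (σ := τ) (R := R) (c j) = 0)
    (f : MvPowerSeries (Fin k) R) :
    msubst c (msubst b f) = msubst (fun i => msubst c (b i)) f := by
  classical
  have hcb : ∀ i, MvPowerSeries.constantCoeff (σ := τ) (R := R) (msubst c (b i)) = 0 := fun i => by
    rw [constantCoeff_msubst hm c hc, hb i]
  ext d
  set p := MvPowerSeries.trunc R (Finsupp.equivFunOnFinite.symm fun _ => wt d + 1) f with hp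
  have hpm : ∀ e : Fin k →₀ ℕ, wt e ≤ wt d → p.coeff e = MvPowerSeries.coeff e f :=
    fun e he => coeff_trunc_matches hk f (wt d) e he
  have hR : MvPowerSeries.coeff d (msubst (fun i => msubst c (b i)) f)
      = MvPowerSeries.coeff d
        (MvPolynomial.eval₂ (MvPowerSeries.C (σ := τ) (R := R)) (fun i => msubst c (b i)) p) :=
    coeff_msubst hk _ hcb f d p hpm
  set v : MvPowerSeries (Fin m) R :=
    MvPolynomial.eval₂ (MvPowerSeries.C (σ := (Fin m)) (R := R)) b p with hv
  have hagree : ∀ e : Fin m →₀ ℕ, wt e ≤ wt d →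
      MvPowerSeries.coeff e (msubst b f) = MvPowerSeries.coeff e v :=
    fun e he => coeff_msubst hk b hb f e p (fun e' he' => hpm e' (le_trans he' he))
  set p'' := MvPowerSeries.trunc R
    (Finsupp.equivFunOnFinite.symm fun _ => wt d + 1) (msubst b f) with hp''
  have hL1 : MvPowerSeries.coeff d (msubst c (msubst b f))
      = MvPowerSeries.coeff d (MvPolynomial.eval₂ (MvPowerSeries.C (σ := τ) (R := R)) c p'') :=
    coeff_msubst hm c hc _ d p''
      (fun e he => coeff_trunc_matches hm (msubst b f) (wt d) e he)
  have hL2 : MvPowerSeries.coeff d (msubst c v)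
      = MvPowerSeries.coeff d (MvPolynomial.eval₂ (MvPowerSeries.C (σ := τ) (R := R)) c p'') :=
    coeff_msubst hm c hc _ d p''
      (fun e he => by
        rw [coeff_trunc_matches hm (msubst b f) (wt d) e he, hagree e he])
  have hkey : msubst c v
      = MvPolynomial.eval₂ (MvPowerSeries.C (σ := τ) (R := R)) (fun i => msubst c (b i)) p := by
    rw [hv]
    induction p using MvPolynomial.induction_on with
    | C r => rw [MvPolynomial.eval₂_C, MvPolynomial.eval₂_C, msubst_C hm c hc]
    | add p q hp hq => rw [MvPolynomial.eval₂_add, MvPolynomial.eval₂_add, msubst_add,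
        hp, hq]
    | mul_X p i hp => rw [MvPolynomial.eval₂_mul, MvPolynomial.eval₂_mul, MvPolynomial.eval₂_X,
        MvPolynomial.eval₂_X, msubst_mul hm c hc, hp]
  rw [hL1, hR, ← hkey, hL2]

lemma reflect_linear {S : Type*} [CommRing S] (g : S) :
    Polynomial.reflect 1 (1 + Polynomial.C g * Polynomial.X)
      = Polynomial.X + Polynomial.C g := by
  rw [Polynomial.reflect_add, Polynomial.reflect_C_mul]
  have h1 : Polynomial.reflect 1 (1 : Polynomial S) = Polynomial.X := by
    rw [← pow_zero (Polynomial.X : Polynomial S), Polynomial.reflect_monomial]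
    simp
  have h2 : Polynomial.reflect 1 (Polynomial.X : Polynomial S) = 1 := by
    rw [← pow_one (Polynomial.X : Polynomial S), Polynomial.reflect_monomial]
    simp
  rw [h1, h2, mul_one]

lemma natDegree_linear_le {S : Type*} [CommRing S] (g : S) :
    (1 + Polynomial.C g * Polynomial.X).natDegree ≤ 1 := by
  apply le_trans (Polynomial.natDegree_add_le _ _)
  simp only [Polynomial.natDegree_one]
  refine max_le (by omega) (le_trans (Polynomial.natDegree_C_mul_le _ _) ?_)
  exact Polynomial.natDegree_X_le

lemma reflect_prod_linear {S : Type*} [CommRing S] {ι : Type*} [DecidableEq ι]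
    (s : Finset ι) (g : ι → S) :
    Polynomial.reflect s.card (∏ i ∈ s, (1 + Polynomial.C (g i) * Polynomial.X))
      = ∏ i ∈ s, (Polynomial.X + Polynomial.C (g i)) := by
  induction s using Finset.cons_induction with
  | empty =>
    simp only [Finset.prod_empty, Finset.card_empty]
    rw [← pow_zero (Polynomial.X : Polynomial S), ← one_mul ((Polynomial.X : Polynomial S)^0),
      ← Polynomial.C_1, Polynomial.reflect_C_mul_X_pow]
    simp
  | cons x s' hx ih =>
    rw [Finset.prod_cons, Finset.prod_cons, Finset.card_cons]
    have hd1 : (1 + Polynomial.C (g x) * Polynomial.X).natDegree ≤ 1 := natDegree_linear_le _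
    have hd2 : (∏ i ∈ s', (1 + Polynomial.C (g i) * Polynomial.X)).natDegree ≤ s'.card := by
      refine le_trans (Polynomial.natDegree_prod_le _ _) ?_
      simpa using Finset.sum_le_card_nsmul s' _ 1 (fun i _ => natDegree_linear_le (g i))
    have : s'.card + 1 = 1 + s'.card := by omega
    rw [this, Polynomial.reflect_mul _ _ hd1 hd2, reflect_linear, ih]

lemma comp_pair {m : ℕ} (hm : m ≠ 0) {τ : Type*} (c : Fin m → MvPowerSeries τ R)
    (hc : ∀ j, MvPowerSeries.constantCoeff (σ := τ) (R := R) (c j) = 0)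
    {p q : MvPowerSeries (Fin m) R}
    (hp : MvPowerSeries.constantCoeff (σ := (Fin m)) (R := R) p = 0)
    (hq : MvPowerSeries.constantCoeff (σ := (Fin m)) (R := R) q = 0)
    (f : MvPowerSeries (Fin 2) R) :
    msubst c (msubst ![p, q] f) = msubst ![msubst c p, msubst c q] f := by
  rw [msubst_comp two_ne_zero hm ![p, q] c ?hb hc f]
  case hb => intro i; fin_cases i <;> simpa
  have hfam : (fun i => msubst c (![p, q] i)) = ![msubst c p, msubst c q] := by
    funext i; fin_cases i <;> simp
  rw [hfam]

lemma pair_eq_X : (![MvPowerSeries.X 0, MvPowerSeries.X 1] : Fin 2 → MvPowerSeries (Fin 2) R)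
    = fun i => MvPowerSeries.X i := by
  funext i; fin_cases i <;> simp

lemma msubst_pair_X (f : MvPowerSeries (Fin 2) R) :
    msubst ![MvPowerSeries.X 0, MvPowerSeries.X 1] f = f := by
  rw [pair_eq_X, msubst_id two_ne_zero]

end Stmt16

end

open Stmt16 in
/-- Over an integral domain `R` with `2` invertible, if composable
`θ₁, θ₂ ∈ R[[X,Y]]` are the roots of a split 2-valued series
`F_t = (1 + θ₁t)(1 + θ₂t)` satisfying the neutral element axiom `F_t(X,0) = (1+Xt)²`,
the symmetry axiom, and the associativity axiom in split form, then `θ₁ = θ₂` and `θ₁`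
is a (commutative) formal group law over `R`. -/
theorem stmt_16 {R : Type*} [CommRing R] [IsDomain R] (h2 : IsUnit (2 : R))
    (θ₁ θ₂ : MvPowerSeries (Fin 2) R)
    (hc₁ : MvPowerSeries.constantCoeff (σ := (Fin 2)) (R := R) θ₁ = 0)
    (hc₂ : MvPowerSeries.constantCoeff (σ := (Fin 2)) (R := R) θ₂ = 0)
    (hneut_sum : msubst ![MvPowerSeries.X 0, 0] θ₁ + msubst ![MvPowerSeries.X 0, 0] θ₂
        = 2 * (MvPowerSeries.X 0 : MvPowerSeries (Fin 2) R))
    (hneut_prod : msubst ![MvPowerSeries.X 0, 0] θ₁ * msubst ![MvPowerSeries.X 0, 0] θ₂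
        = (MvPowerSeries.X 0 : MvPowerSeries (Fin 2) R) ^ 2)
    (hsym_sum : msubst ![MvPowerSeries.X 1, MvPowerSeries.X 0] θ₁
        + msubst ![MvPowerSeries.X 1, MvPowerSeries.X 0] θ₂ = θ₁ + θ₂)
    (hsym_prod : msubst ![MvPowerSeries.X 1, MvPowerSeries.X 0] θ₁
        * msubst ![MvPowerSeries.X 1, MvPowerSeries.X 0] θ₂ = θ₁ * θ₂)
    (hassoc : (∏ ij : Fin 2 × Fin 2,
        (1 + Polynomial.C (msubst ![msubst ![(MvPowerSeries.X 0 : MvPowerSeries (Fin 3) R),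
            MvPowerSeries.X 1] (![θ₁, θ₂] ij.2), MvPowerSeries.X 2] (![θ₁, θ₂] ij.1))
          * Polynomial.X))
      = ∏ ij : Fin 2 × Fin 2,
        (1 + Polynomial.C (msubst ![(MvPowerSeries.X 0 : MvPowerSeries (Fin 3) R),
            msubst ![MvPowerSeries.X 1, MvPowerSeries.X 2] (![θ₁, θ₂] ij.2)] (![θ₁, θ₂] ij.1))
          * Polynomial.X)) :
    θ₁ = θ₂ ∧ IsFGL θ₁ := by
  classical
  have h3 : (3 : ℕ) ≠ 0 := by norm_num
  have hX2 : ∀ i : Fin 2, MvPowerSeries.constantCoeff (σ := (Fin 2)) (R := R) (MvPowerSeries.X i) = 0 :=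
    fun i => MvPowerSeries.constantCoeff_X i
  have hX3 : ∀ i : Fin 3, MvPowerSeries.constantCoeff (σ := (Fin 3)) (R := R) (MvPowerSeries.X i) = 0 :=
    fun i => MvPowerSeries.constantCoeff_X i
  have h0c : MvPowerSeries.constantCoeff (σ := (Fin 2)) (R := R) 0 = 0 := map_zero _
  have h2u : IsUnit (2 : MvPowerSeries (Fin 2) R) := by
    have := h2.map (MvPowerSeries.C (σ := (Fin 2)) (R := R))
    rwa [map_ofNat] at this
  -- Step A : right neutral
  have hsq : (msubst ![(MvPowerSeries.X 0 : MvPowerSeries (Fin 2) R), 0] θ₁ - msubst ![(MvPowerSeries.X 0 : MvPowerSeries (Fin 2) R), 0] θ₂) ^ 2 = 0 := by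
    linear_combination (msubst ![(MvPowerSeries.X 0 : MvPowerSeries (Fin 2) R), 0] θ₁ + msubst ![(MvPowerSeries.X 0 : MvPowerSeries (Fin 2) R), 0] θ₂
      + 2 * (MvPowerSeries.X 0 : MvPowerSeries (Fin 2) R)) * hneut_sum - 4 * hneut_prod
  have hθd : msubst ![(MvPowerSeries.X 0 : MvPowerSeries (Fin 2) R), 0] θ₁ = msubst ![(MvPowerSeries.X 0 : MvPowerSeries (Fin 2) R), 0] θ₂ :=
    sub_eq_zero.mp ((pow_eq_zero_iff (two_ne_zero)).mp hsq)
  have hu1 : msubst ![(MvPowerSeries.X 0 : MvPowerSeries (Fin 2) R), 0] θ₁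
      = (MvPowerSeries.X 0 : MvPowerSeries (Fin 2) R) := by
    have h2e : (2 : MvPowerSeries (Fin 2) R) * msubst ![(MvPowerSeries.X 0 :
        MvPowerSeries (Fin 2) R), 0] θ₁ = 2 * MvPowerSeries.X 0 := by
      linear_combination hneut_sum + hθd
    exact h2u.mul_left_cancel h2e
  have hu2 : msubst ![(MvPowerSeries.X 0 : MvPowerSeries (Fin 2) R), 0] θ₂
      = (MvPowerSeries.X 0 : MvPowerSeries (Fin 2) R) := hθd ▸ hu1
  have hu' : ∀ i : Fin 2, msubst ![(MvPowerSeries.X 0 : MvPowerSeries (Fin 2) R), 0] (![θ₁, θ₂] i)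
      = (MvPowerSeries.X 0 : MvPowerSeries (Fin 2) R) := by
    intro i; fin_cases i
    · simpa using hu1
    · simpa using hu2
  have hΘc : ∀ i : Fin 2, MvPowerSeries.constantCoeff (σ := (Fin 2)) (R := R) (![θ₁, θ₂] i) = 0 := by
    intro i; fin_cases i
    · simpa using hc₁
    · simpa using hc₂
  -- generic right unit
  have hrun : ∀ i : Fin 2, ∀ g : MvPowerSeries (Fin 2) R,
      MvPowerSeries.constantCoeff (σ := (Fin 2)) (R := R) g = 0 → msubst ![g, 0] (![θ₁, θ₂] i) = g := by
    intro i g hg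
    have hgg : ∀ j : Fin 2,
        MvPowerSeries.constantCoeff (σ := (Fin 2)) (R := R) ((![g, g] : Fin 2 → _) j) = 0 := by
      intro j; fin_cases j <;> simpa
    have h := congrArg (msubst ![g, g]) (hu' i)
    rw [comp_pair two_ne_zero ![g, g] hgg (hX2 0) h0c] at h
    rw [msubst_zero, msubst_X two_ne_zero _ hgg 0] at h
    simpa using h
  have ht' : ∀ i : Fin 2, msubst ![(MvPowerSeries.X 1 : MvPowerSeries (Fin 2) R), 0] (![θ₁, θ₂] i)
      = (MvPowerSeries.X 1 : MvPowerSeries (Fin 2) R) :=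
    fun i => hrun i (MvPowerSeries.X 1) (hX2 1)
  -- Step B : symmetry dichotomy
  have hsq2 : (msubst ![(MvPowerSeries.X 1 : MvPowerSeries (Fin 2) R), MvPowerSeries.X 0] θ₁
      - msubst ![(MvPowerSeries.X 1 : MvPowerSeries (Fin 2) R), MvPowerSeries.X 0] θ₂) ^ 2 = (θ₁ - θ₂) ^ 2 := by
    linear_combination (msubst ![(MvPowerSeries.X 1 : MvPowerSeries (Fin 2) R), MvPowerSeries.X 0] θ₁
      + msubst ![(MvPowerSeries.X 1 : MvPowerSeries (Fin 2) R), MvPowerSeries.X 0] θ₂ + θ₁ + θ₂) * hsym_sum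
      - 4 * hsym_prod
  have hfac : ((msubst ![(MvPowerSeries.X 1 : MvPowerSeries (Fin 2) R), MvPowerSeries.X 0] θ₁
      - msubst ![(MvPowerSeries.X 1 : MvPowerSeries (Fin 2) R), MvPowerSeries.X 0] θ₂) - (θ₁ - θ₂))
      * ((msubst ![(MvPowerSeries.X 1 : MvPowerSeries (Fin 2) R), MvPowerSeries.X 0] θ₁
      - msubst ![(MvPowerSeries.X 1 : MvPowerSeries (Fin 2) R), MvPowerSeries.X 0] θ₂) + (θ₁ - θ₂)) = 0 := by
    linear_combination hsq2
  have hcases : (msubst ![(MvPowerSeries.X 1 : MvPowerSeries (Fin 2) R), MvPowerSeries.X 0] θ₁ = θ₁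
      ∧ msubst ![(MvPowerSeries.X 1 : MvPowerSeries (Fin 2) R), MvPowerSeries.X 0] θ₂ = θ₂)
      ∨ (msubst ![(MvPowerSeries.X 1 : MvPowerSeries (Fin 2) R), MvPowerSeries.X 0] θ₁ = θ₂
      ∧ msubst ![(MvPowerSeries.X 1 : MvPowerSeries (Fin 2) R), MvPowerSeries.X 0] θ₂ = θ₁) := by
    rcases mul_eq_zero.mp hfac with h | h
    · left
      constructor
      · refine h2u.mul_left_cancel (?_ : (2 : MvPowerSeries (Fin 2) R) * _ = 2 * _)
        linear_combination hsym_sum + h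
      · refine h2u.mul_left_cancel (?_ : (2 : MvPowerSeries (Fin 2) R) * _ = 2 * _)
        linear_combination hsym_sum - h
    · right
      constructor
      · refine h2u.mul_left_cancel (?_ : (2 : MvPowerSeries (Fin 2) R) * _ = 2 * _)
        linear_combination hsym_sum + h
      · refine h2u.mul_left_cancel (?_ : (2 : MvPowerSeries (Fin 2) R) * _ = 2 * _)
        linear_combination hsym_sum - h
  -- Step C : left neutral
  have hswapc : ∀ j : Fin 2, MvPowerSeries.constantCoeff (σ := (Fin 2)) (R := R)
      ((![(0 : MvPowerSeries (Fin 2) R), MvPowerSeries.X 1] : Fin 2 → _) j) = 0 := by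
    intro j; fin_cases j <;> simp
  have hleft : ∀ θ θ' : MvPowerSeries (Fin 2) R,
      msubst ![(MvPowerSeries.X 1 : MvPowerSeries (Fin 2) R), MvPowerSeries.X 0] θ' = θ →
      msubst ![(MvPowerSeries.X 1 : MvPowerSeries (Fin 2) R), 0] θ' = (MvPowerSeries.X 1 : MvPowerSeries (Fin 2) R) →
      msubst ![(0 : MvPowerSeries (Fin 2) R), MvPowerSeries.X 1] θ
        = (MvPowerSeries.X 1 : MvPowerSeries (Fin 2) R) := by
    intro θ θ' hswap hru
    rw [← hswap, comp_pair two_ne_zero _ hswapc (hX2 1) (hX2 0)]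
    rw [msubst_X two_ne_zero _ hswapc 1, msubst_X two_ne_zero _ hswapc 0]
    simpa using hru
  have hl' : ∀ i : Fin 2,
      msubst ![(0 : MvPowerSeries (Fin 2) R), MvPowerSeries.X 1] (![θ₁, θ₂] i)
        = (MvPowerSeries.X 1 : MvPowerSeries (Fin 2) R) := by
    intro i
    rcases hcases with ⟨e1, e2⟩ | ⟨e1, e2⟩
    · fin_cases i
      · exact hleft θ₁ θ₁ e1 (by simpa using ht' 0)
      · exact hleft θ₂ θ₂ e2 (by simpa using ht' 1)
    · fin_cases i
      · exact hleft θ₁ θ₂ e2 (by simpa using ht' 1)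
      · exact hleft θ₂ θ₁ e1 (by simpa using ht' 0)
  -- Step D : extract one relation from associativity
  have h4 := congrArg (Polynomial.reflect (Finset.univ : Finset (Fin 2 × Fin 2)).card) hassoc
  rw [reflect_prod_linear, reflect_prod_linear] at h4
  have h5 := congrArg (Polynomial.eval
    (-(msubst ![msubst ![(MvPowerSeries.X 0 : MvPowerSeries (Fin 3) R),
      MvPowerSeries.X 1] θ₂, MvPowerSeries.X 2] θ₁))) h4
  rw [Polynomial.eval_prod, Polynomial.eval_prod] at h5
  simp only [Polynomial.eval_add, Polynomial.eval_X, Polynomial.eval_C] at h5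
  have hzero : (∏ ij : Fin 2 × Fin 2,
      (-(msubst ![msubst ![(MvPowerSeries.X 0 : MvPowerSeries (Fin 3) R),
          MvPowerSeries.X 1] θ₂, MvPowerSeries.X 2] θ₁)
        + msubst ![msubst ![(MvPowerSeries.X 0 : MvPowerSeries (Fin 3) R),
          MvPowerSeries.X 1] (![θ₁, θ₂] ij.2), MvPowerSeries.X 2] (![θ₁, θ₂] ij.1))) = 0 := by
    refine Finset.prod_eq_zero (Finset.mem_univ ((0 : Fin 2), (1 : Fin 2))) ?_
    simp
  rw [hzero] at h5
  obtain ⟨pq, -, hpq⟩ := Finset.prod_eq_zero_iff.mp h5.symm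
  have hmem : msubst ![(MvPowerSeries.X 0 : MvPowerSeries (Fin 3) R),
        msubst ![MvPowerSeries.X 1, MvPowerSeries.X 2] (![θ₁, θ₂] pq.2)] (![θ₁, θ₂] pq.1)
      = msubst ![msubst ![(MvPowerSeries.X 0 : MvPowerSeries (Fin 3) R),
        MvPowerSeries.X 1] θ₂, MvPowerSeries.X 2] θ₁ := by
    linear_combination hpq
  -- substitution families
  have hc₀ : ∀ j : Fin 3, MvPowerSeries.constantCoeff (σ := (Fin 2)) (R := R)
      ((![(MvPowerSeries.X 0 : MvPowerSeries (Fin 2) R), MvPowerSeries.X 1, 0] : Fin 3 → MvPowerSeries (Fin 2) R) j)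
        = 0 := by
    intro j; fin_cases j <;> simp
  have hc₁' : ∀ j : Fin 3, MvPowerSeries.constantCoeff (σ := (Fin 2)) (R := R)
      ((![(MvPowerSeries.X 0 : MvPowerSeries (Fin 2) R), 0, MvPowerSeries.X 1] : Fin 3 → MvPowerSeries (Fin 2) R) j)
        = 0 := by
    intro j; fin_cases j <;> simp
  have hc₀0 : msubst ![(MvPowerSeries.X 0 : MvPowerSeries (Fin 2) R), MvPowerSeries.X 1, 0]
      (MvPowerSeries.X 0 : MvPowerSeries (Fin 3) R) = (MvPowerSeries.X 0 : MvPowerSeries (Fin 2) R) := by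
    rw [msubst_X h3 _ hc₀]; simp
  have hc₀1 : msubst ![(MvPowerSeries.X 0 : MvPowerSeries (Fin 2) R), MvPowerSeries.X 1, 0]
      (MvPowerSeries.X 1 : MvPowerSeries (Fin 3) R) = (MvPowerSeries.X 1 : MvPowerSeries (Fin 2) R) := by
    rw [msubst_X h3 _ hc₀]; simp
  have hc₀2 : msubst ![(MvPowerSeries.X 0 : MvPowerSeries (Fin 2) R), MvPowerSeries.X 1, 0]
      (MvPowerSeries.X 2 : MvPowerSeries (Fin 3) R) = (0 : MvPowerSeries (Fin 2) R) := by
    rw [msubst_X h3 _ hc₀]; simp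
  have hc₁0 : msubst ![(MvPowerSeries.X 0 : MvPowerSeries (Fin 2) R), 0, MvPowerSeries.X 1]
      (MvPowerSeries.X 0 : MvPowerSeries (Fin 3) R) = (MvPowerSeries.X 0 : MvPowerSeries (Fin 2) R) := by
    rw [msubst_X h3 _ hc₁']; simp
  have hc₁1 : msubst ![(MvPowerSeries.X 0 : MvPowerSeries (Fin 2) R), 0, MvPowerSeries.X 1]
      (MvPowerSeries.X 1 : MvPowerSeries (Fin 3) R) = (0 : MvPowerSeries (Fin 2) R) := by
    rw [msubst_X h3 _ hc₁']; simp
  have hc₁2 : msubst ![(MvPowerSeries.X 0 : MvPowerSeries (Fin 2) R), 0, MvPowerSeries.X 1]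
      (MvPowerSeries.X 2 : MvPowerSeries (Fin 3) R) = (MvPowerSeries.X 1 : MvPowerSeries (Fin 2) R) := by
    rw [msubst_X h3 _ hc₁']; simp
  have hFc : ∀ i : Fin 2, MvPowerSeries.constantCoeff (σ := (Fin 3)) (R := R)
      (msubst ![MvPowerSeries.X 1, MvPowerSeries.X 2] (![θ₁, θ₂] i)) = 0 := by
    intro i
    rw [constantCoeff_msubst two_ne_zero _ (by intro j; fin_cases j <;> simp)]
    exact hΘc i
  have hEc : MvPowerSeries.constantCoeff (σ := (Fin 3)) (R := R)
      (msubst ![(MvPowerSeries.X 0 : MvPowerSeries (Fin 3) R), MvPowerSeries.X 1] θ₂)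
        = 0 := by
    rw [constantCoeff_msubst two_ne_zero _ (by intro j; fin_cases j <;> simp)]
    exact hc₂
  -- computation with Z := 0
  have hcomp0 := congrArg (msubst ![(MvPowerSeries.X 0 : MvPowerSeries (Fin 2) R), MvPowerSeries.X 1, 0]) hmem
  rw [comp_pair h3 _ hc₀ (hX3 0) (hFc pq.2),
    comp_pair h3 _ hc₀ (hX3 1) (hX3 2),
    comp_pair h3 _ hc₀ hEc (hX3 2),
    comp_pair h3 _ hc₀ (hX3 0) (hX3 1),
    hc₀0, hc₀1, hc₀2, msubst_pair_X, ht' pq.2, msubst_pair_X] at hcomp0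
  have hrhs0 : msubst ![θ₂, 0] θ₁ = θ₂ := by simpa using hrun 0 θ₂ hc₂
  rw [hrhs0] at hcomp0
  -- computation with Y := 0
  have hcomp1 := congrArg (msubst ![(MvPowerSeries.X 0 : MvPowerSeries (Fin 2) R), 0, MvPowerSeries.X 1]) hmem
  rw [comp_pair h3 _ hc₁' (hX3 0) (hFc pq.2),
    comp_pair h3 _ hc₁' (hX3 1) (hX3 2),
    comp_pair h3 _ hc₁' hEc (hX3 2),
    comp_pair h3 _ hc₁' (hX3 0) (hX3 1),
    hc₁0, hc₁1, hc₁2, hl' pq.2, msubst_pair_X, hu2, msubst_pair_X] at hcomp1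
  have hθeq : θ₁ = θ₂ := hcomp1.symm.trans hcomp0
  refine ⟨hθeq, ?_, ?_, ?_, ?_⟩
  · exact hu1
  · simpa using hl' 0
  · rcases hcases with ⟨e1, _⟩ | ⟨e1, _⟩
    · exact e1
    · exact e1.trans hθeq.symm
  · have hall : ∀ i : Fin 2, (![θ₁, θ₂] : Fin 2 → MvPowerSeries (Fin 2) R) i = θ₁ := by
      intro i; fin_cases i
      · simp
      · simpa using hθeq.symm
    rw [hall pq.1, hall pq.2, ← hθeq] at hmem
    exact hmem.symm
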